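/- arXiv:1006.1165 — 2 statements merged into one kernel-verified Lean document; each statement's English description precedes it below -/
import Mathlib

section
/- BLOCK-SOME dynamic-programming recursion: for a dyadic interval D with halves D_L, D_R and F ≥ 0, define z_D(F) as the minimum over families S of at most F pairwise-disjoint dyadic subintervals of D of Σ_{ip ∈ WL ∩ ∪S} w(ip) − Σ_{ip ∈ BL ∩ ∪S} b(ip), where w, b ≥ 0 are good and bad weights. Then z_D(0) = 0 and for F ≥ 1, z_D(F) = min( (g_D − b_D), min over n = 0,…,F of ( z_{D_L}(F−n) + z_{D_R}(n) ) ), where g_D = Σ_{ip ∈ WL ∩ D} w(ip) and b_D = Σ_{ip ∈ BL ∩ D} b(ip). -/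
/-- `ip` lies in the dyadic interval of prefix `q = (p, l)` in `w`-bit address space:
`[p·2^(w−l), (p+1)·2^(w−l))`. -/
def inI (w : ℕ) (q : ℕ × ℕ) (ip : ℕ) : Prop :=
  q.1 * 2 ^ (w - q.2) ≤ ip ∧ ip < (q.1 + 1) * 2 ^ (w - q.2)

instance (w : ℕ) (q : ℕ × ℕ) (ip : ℕ) : Decidable (inI w q ip) := by
  unfold inI; infer_instance

/-- `(p, l)` is a valid prefix: `l ≤ w` and `p < 2^l`. -/
def ValidPrefix (w : ℕ) (q : ℕ × ℕ) : Prop := q.2 ≤ w ∧ q.1 < 2 ^ q.2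

/-- The dyadic intervals of the prefixes in `S` are pairwise disjoint. -/
def PairwiseDisjointI (w : ℕ) (S : Finset (ℕ × ℕ)) : Prop :=
  ∀ q ∈ S, ∀ q' ∈ S, q ≠ q' → ∀ ip, ¬(inI w q ip ∧ inI w q' ip)

/-- `zBS w BL WL bw wgt D F`: BLOCK-SOME optimum on `D` with at most `F` filters:
minimum of (good weight blocked) − (bad weight blocked) over families of at most `F`
pairwise-disjoint dyadic subintervals of `D`. -/
noncomputable def zBS (w : ℕ) (BL WL : Finset ℕ) (bw wgt : ℕ → ℝ) (D : ℕ × ℕ) (F : ℕ) : ℝ :=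
  sInf {x : ℝ | ∃ S : Finset (ℕ × ℕ),
    (∀ q ∈ S, ValidPrefix w q ∧ ∀ ip, inI w q ip → inI w D ip) ∧
    S.card ≤ F ∧ PairwiseDisjointI w S ∧
    x = (∑ q ∈ S, ∑ ip ∈ WL.filter (fun ip => inI w q ip), wgt ip) -
        (∑ q ∈ S, ∑ ip ∈ BL.filter (fun ip => inI w q ip), bw ip)}

section Aux
/-! ### Auxiliary definitions and lemmas -/

def bsCost (w : ℕ) (BL WL : Finset ℕ) (bw wgt : ℕ → ℝ) (S : Finset (ℕ × ℕ)) : ℝ :=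
  (∑ q ∈ S, ∑ ip ∈ WL.filter (fun ip => inI w q ip), wgt ip) -
  (∑ q ∈ S, ∑ ip ∈ BL.filter (fun ip => inI w q ip), bw ip)

def bsFeas (w : ℕ) (D : ℕ × ℕ) (F : ℕ) (S : Finset (ℕ × ℕ)) : Prop :=
  (∀ q ∈ S, ValidPrefix w q ∧ ∀ ip, inI w q ip → inI w D ip) ∧
  S.card ≤ F ∧ PairwiseDisjointI w S

def bsSet (w : ℕ) (BL WL : Finset ℕ) (bw wgt : ℕ → ℝ) (D : ℕ × ℕ) (F : ℕ) : Set ℝ :=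
  {x : ℝ | ∃ S : Finset (ℕ × ℕ), bsFeas w D F S ∧ x = bsCost w BL WL bw wgt S}

lemma zBS_eq (w : ℕ) (BL WL : Finset ℕ) (bw wgt : ℕ → ℝ) (D : ℕ × ℕ) (F : ℕ) :
    zBS w BL WL bw wgt D F = sInf (bsSet w BL WL bw wgt D F) := by
  unfold zBS bsSet bsFeas bsCost
  congr 1
  ext x
  constructor
  · rintro ⟨S, h1, h2, h3, h4⟩; exact ⟨S, ⟨h1, h2, h3⟩, h4⟩
  · rintro ⟨S, ⟨h1, h2, h3⟩, h4⟩; exact ⟨S, h1, h2, h3, h4⟩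

lemma bs_empty_mem (w : ℕ) (BL WL : Finset ℕ) (bw wgt : ℕ → ℝ) (D : ℕ × ℕ) (F : ℕ) :
    (0 : ℝ) ∈ bsSet w BL WL bw wgt D F := by
  refine ⟨∅, ⟨?_, ?_, ?_⟩, ?_⟩ <;> simp [PairwiseDisjointI, bsCost]

lemma bs_nonempty (w : ℕ) (BL WL : Finset ℕ) (bw wgt : ℕ → ℝ) (D : ℕ × ℕ) (F : ℕ) :
    (bsSet w BL WL bw wgt D F).Nonempty := ⟨0, bs_empty_mem w BL WL bw wgt D F⟩

lemma bs_lb (w : ℕ) (BL WL : Finset ℕ) (bw wgt : ℕ → ℝ)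
    (hb : ∀ ip ∈ BL, 0 ≤ bw ip) (hwgt : ∀ ip ∈ WL, 0 ≤ wgt ip) (D : ℕ × ℕ) (F : ℕ) :
    ∀ x ∈ bsSet w BL WL bw wgt D F, -(∑ ip ∈ BL, bw ip) ≤ x := by
  rintro x ⟨S, ⟨_, _, hdisj⟩, rfl⟩
  have hgood : 0 ≤ ∑ q ∈ S, ∑ ip ∈ WL.filter (fun ip => inI w q ip), wgt ip := by
    refine Finset.sum_nonneg fun q _ => Finset.sum_nonneg fun ip hip => ?_
    exact hwgt ip (Finset.mem_filter.mp hip).1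
  have hbad : (∑ q ∈ S, ∑ ip ∈ BL.filter (fun ip => inI w q ip), bw ip) ≤ ∑ ip ∈ BL, bw ip := by
    have hpd : (S : Set (ℕ × ℕ)).PairwiseDisjoint (fun q => BL.filter (fun ip => inI w q ip)) := by
      intro q hq q' hq' hne
      simp only [Function.onFun, Finset.disjoint_left]
      intro ip hip hip'
      exact hdisj q hq q' hq' hne ip ⟨(Finset.mem_filter.mp hip).2, (Finset.mem_filter.mp hip').2⟩
    rw [← Finset.sum_biUnion hpd]
    refine Finset.sum_le_sum_of_subset_of_nonneg ?_ (fun ip hip _ => hb ip hip)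
    intro ip hip
    obtain ⟨q, _, hq⟩ := Finset.mem_biUnion.mp hip
    exact (Finset.mem_filter.mp hq).1
  unfold bsCost
  linarith

lemma bs_bdd (w : ℕ) (BL WL : Finset ℕ) (bw wgt : ℕ → ℝ)
    (hb : ∀ ip ∈ BL, 0 ≤ bw ip) (hwgt : ∀ ip ∈ WL, 0 ≤ wgt ip) (D : ℕ × ℕ) (F : ℕ) :
    BddBelow (bsSet w BL WL bw wgt D F) :=
  ⟨-(∑ ip ∈ BL, bw ip), bs_lb w BL WL bw wgt hb hwgt D F⟩

lemma zBS_lb (w : ℕ) (BL WL : Finset ℕ) (bw wgt : ℕ → ℝ)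
    (hb : ∀ ip ∈ BL, 0 ≤ bw ip) (hwgt : ∀ ip ∈ WL, 0 ≤ wgt ip) (D : ℕ × ℕ) (F : ℕ) :
    -(∑ ip ∈ BL, bw ip) ≤ zBS w BL WL bw wgt D F := by
  rw [zBS_eq]
  exact le_csInf (bs_nonempty _ _ _ _ _ _ _) (bs_lb w BL WL bw wgt hb hwgt D F)

lemma zBS_zero (w : ℕ) (BL WL : Finset ℕ) (bw wgt : ℕ → ℝ) (D : ℕ × ℕ) :
    zBS w BL WL bw wgt D 0 = 0 := by
  rw [zBS_eq]
  have h : bsSet w BL WL bw wgt D 0 = {0} := by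
    ext x
    constructor
    · rintro ⟨S, ⟨_, hcard, _⟩, rfl⟩
      have : S = ∅ := Finset.card_eq_zero.mp (Nat.le_zero.mp hcard)
      simp [this, bsCost]
    · rintro rfl
      exact bs_empty_mem w BL WL bw wgt D 0
  rw [h, csInf_singleton]

end Aux

section Arith

lemma two_pow_split {w l : ℕ} (hl : l < w) :
    (2:ℕ) ^ (w - l) = 2 * 2 ^ (w - (l + 1)) := by
  have : w - l = (w - (l+1)) + 1 := by omega
  rw [this, pow_succ]; ring

lemma inI_subL {w p l : ℕ} (hl : l < w) (ip : ℕ) (h : inI w (2 * p, l + 1) ip) :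
    inI w (p, l) ip := by
  have h1 : 2 * p * 2 ^ (w - (l+1)) ≤ ip := h.1
  have h2 : ip < (2 * p + 1) * 2 ^ (w - (l+1)) := h.2
  have hB : 0 < (2:ℕ) ^ (w - (l+1)) := Nat.pow_pos (by norm_num)
  have key1 : 2 * p * 2 ^ (w - (l+1)) = p * 2 ^ (w - l) := by rw [two_pow_split hl]; ring
  have key2 : (2 * p + 2) * 2 ^ (w - (l+1)) = (p + 1) * 2 ^ (w - l) := by
    rw [two_pow_split hl]; ring
  refine ⟨?_, ?_⟩
  · show p * 2 ^ (w - l) ≤ ip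
    omega
  show ip < (p + 1) * 2 ^ (w - l)
  have : (2 * p + 1) * 2 ^ (w - (l+1)) + 2 ^ (w - (l+1)) = (2 * p + 2) * 2 ^ (w - (l+1)) := by ring
  omega

lemma inI_subR {w p l : ℕ} (hl : l < w) (ip : ℕ) (h : inI w (2 * p + 1, l + 1) ip) :
    inI w (p, l) ip := by
  have h1 : (2 * p + 1) * 2 ^ (w - (l+1)) ≤ ip := h.1
  have h2 : ip < (2 * p + 1 + 1) * 2 ^ (w - (l+1)) := h.2
  have hB : 0 < (2:ℕ) ^ (w - (l+1)) := Nat.pow_pos (by norm_num)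
  have key1 : 2 * p * 2 ^ (w - (l+1)) = p * 2 ^ (w - l) := by rw [two_pow_split hl]; ring
  have key2 : (2 * p + 1 + 1) * 2 ^ (w - (l+1)) = (p + 1) * 2 ^ (w - l) := by
    rw [two_pow_split hl]; ring
  have key3 : (2 * p + 1) * 2 ^ (w - (l+1)) = 2 * p * 2 ^ (w - (l+1)) + 2 ^ (w - (l+1)) := by ring
  refine ⟨?_, ?_⟩
  · show p * 2 ^ (w - l) ≤ ip
    omega
  · show ip < (p + 1) * 2 ^ (w - l)
    omega

lemma inI_disjLR {w p l : ℕ} (ip : ℕ) :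
    ¬(inI w (2 * p, l + 1) ip ∧ inI w (2 * p + 1, l + 1) ip) := by
  rintro ⟨⟨_, h2⟩, ⟨h3, _⟩⟩
  simp only [inI] at h2 h3
  omega

lemma inI_self {w : ℕ} {q : ℕ × ℕ} : inI w q (q.1 * 2 ^ (w - q.2)) := by
  refine ⟨le_refl _, ?_⟩
  have : 0 < (2:ℕ) ^ (w - q.2) := Nat.pow_pos (by norm_num)
  nlinarith

lemma bs_split {w p l a m : ℕ} (hl : l < w) (hval : ValidPrefix w (a, m))
    (hsub : ∀ ip, inI w (a, m) ip → inI w (p, l) ip) (hne : (a, m) ≠ (p, l)) :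
    (∀ ip, inI w (a, m) ip → inI w (2 * p, l + 1) ip) ∨
    (∀ ip, inI w (a, m) ip → inI w (2 * p + 1, l + 1) ip) := by
  have hm : m ≤ w := hval.1
  set A := (2:ℕ) ^ (w - m) with hA
  set B := (2:ℕ) ^ (w - (l + 1)) with hBdef
  have hApos : 0 < A := Nat.pow_pos (by norm_num)
  have hBpos : 0 < B := Nat.pow_pos (by norm_num)
  have h2B : (2:ℕ) ^ (w - l) = 2 * B := two_pow_split hl
  have hsub' : ∀ ip, a * A ≤ ip → ip < (a + 1) * A →
      p * 2 ^ (w - l) ≤ ip ∧ ip < (p + 1) * 2 ^ (w - l) := fun ip h1 h2 => hsub ip ⟨h1, h2⟩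
  have hAadd : (a + 1) * A = a * A + A := by ring
  have hlo := hsub' (a * A) le_rfl (by omega)
  have hhi' := hsub' ((a + 1) * A - 1) (by omega) (by omega)
  have hhi : (a + 1) * A ≤ (p + 1) * 2 ^ (w - l) := by omega
  have hsum : (p + 1) * 2 ^ (w - l) = p * 2 ^ (w - l) + 2 ^ (w - l) := by ring
  have hA2B : A ≤ 2 * B := by omega
  have hlm : l + 1 ≤ m := by
    have hle : w - m ≤ w - l := by
      by_contra hcon
      push_neg at hcon
      have h3 : (2:ℕ) ^ (w - l) < 2 ^ (w - m) := Nat.pow_lt_pow_right (by norm_num) hcon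
      omega
    have hml : l ≤ m := by omega
    rcases Nat.lt_or_ge l m with h | h
    · omega
    exfalso
    apply hne
    have hwm : w - m = w - l := by omega
    have hAeq : A = 2 * B := by rw [hA, hwm, h2B]
    have h1 : p ≤ a := by
      have := hlo.1
      rw [h2B, hAeq] at this
      exact le_of_mul_le_mul_right this (by omega)
    have h2 : a + 1 ≤ p + 1 := by
      have := hhi
      rw [h2B, hAeq] at this
      exact le_of_mul_le_mul_right this (by omega)
    have : a = p := by omega
    have : m = l := by omega
    simp [Prod.ext_iff]; omega
  set K := (2:ℕ) ^ (m - (l + 1)) with hK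
  have hKA : B = K * A := by
    rw [hBdef, hK, hA, ← pow_add]
    congr 1
    omega
  rcases Nat.lt_or_ge a ((2 * p + 1) * K) with hcase | hcase
  · left
    intro ip hip
    have hip1 : a * A ≤ ip := hip.1
    have hip2 : ip < (a + 1) * A := hip.2
    refine ⟨?_, ?_⟩
    · show 2 * p * B ≤ ip
      have e1 : 2 * p * B = p * 2 ^ (w - l) := by rw [h2B]; ring
      have := hlo.1
      omega
    · show ip < (2 * p + 1) * B
      calc ip < (a + 1) * A := hip2
        _ ≤ (2 * p + 1) * K * A := Nat.mul_le_mul_right A hcase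
        _ = (2 * p + 1) * B := by rw [hKA]; ring
  · right
    intro ip hip
    have hip1 : a * A ≤ ip := hip.1
    have hip2 : ip < (a + 1) * A := hip.2
    refine ⟨?_, ?_⟩
    · show (2 * p + 1) * B ≤ ip
      calc (2 * p + 1) * B = (2 * p + 1) * K * A := by rw [hKA]; ring
        _ ≤ a * A := Nat.mul_le_mul_right A hcase
        _ ≤ ip := hip1
    · show ip < (2 * p + 1 + 1) * B
      calc ip < (a + 1) * A := hip2
        _ ≤ (p + 1) * 2 ^ (w - l) := hhi
        _ = (2 * p + 1 + 1) * B := by rw [h2B]; ring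

end Arith

lemma bs_union {w p l F n : ℕ} (BL WL : Finset ℕ) (bw wgt : ℕ → ℝ)
    (hl : l < w) (hn : n ≤ F) {SL SR : Finset (ℕ × ℕ)}
    (hL : bsFeas w (2 * p, l + 1) (F - n) SL) (hR : bsFeas w (2 * p + 1, l + 1) n SR) :
    bsFeas w (p, l) F (SL ∪ SR) ∧
    bsCost w BL WL bw wgt (SL ∪ SR) =
      bsCost w BL WL bw wgt SL + bsCost w BL WL bw wgt SR := by
  obtain ⟨hLsub, hLcard, hLpd⟩ := hL
  obtain ⟨hRsub, hRcard, hRpd⟩ := hR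
  have hdisj : Disjoint SL SR := by
    rw [Finset.disjoint_left]
    intro q hqL hqR
    have h1 := (hLsub q hqL).2 _ (inI_self (w := w) (q := q))
    have h2 := (hRsub q hqR).2 _ (inI_self (w := w) (q := q))
    exact inI_disjLR _ ⟨h1, h2⟩
  refine ⟨⟨?_, ?_, ?_⟩, ?_⟩
  · intro q hq
    rcases Finset.mem_union.mp hq with h | h
    · exact ⟨(hLsub q h).1, fun ip hip => inI_subL hl ip ((hLsub q h).2 ip hip)⟩
    · exact ⟨(hRsub q h).1, fun ip hip => inI_subR hl ip ((hRsub q h).2 ip hip)⟩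
  · rw [Finset.card_union_of_disjoint hdisj]
    omega
  · intro q hq q' hq' hne ip hip
    rcases Finset.mem_union.mp hq with h | h <;> rcases Finset.mem_union.mp hq' with h' | h'
    · exact hLpd q h q' h' hne ip hip
    · exact inI_disjLR ip ⟨(hLsub q h).2 ip hip.1, (hRsub q' h').2 ip hip.2⟩
    · exact inI_disjLR ip ⟨(hLsub q' h').2 ip hip.2, (hRsub q h).2 ip hip.1⟩
    · exact hRpd q h q' h' hne ip hip
  · unfold bsCost
    rw [Finset.sum_union hdisj, Finset.sum_union hdisj]
    ring

/-- BLOCK-SOME dynamic-programming recursion: `z_D(0) = 0`, and for `F ≥ 1`,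
`z_D(F) = min(g_D − b_D, min over n = 0,…,F of z_{D_L}(F−n) + z_{D_R}(n))`. -/
theorem stmt11 (w p l F : ℕ) (BL WL : Finset ℕ) (bw wgt : ℕ → ℝ)
    (hb : ∀ ip ∈ BL, 0 ≤ bw ip) (hwgt : ∀ ip ∈ WL, 0 ≤ wgt ip)
    (hl : l < w) (hp : p < 2 ^ l) (hF : 1 ≤ F) :
    zBS w BL WL bw wgt (p, l) 0 = 0 ∧
    zBS w BL WL bw wgt (p, l) F =
      min ((∑ ip ∈ WL.filter (fun ip => inI w (p, l) ip), wgt ip) -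
            (∑ ip ∈ BL.filter (fun ip => inI w (p, l) ip), bw ip))
        (sInf {x : ℝ | ∃ n, n ≤ F ∧
          x = zBS w BL WL bw wgt (2 * p, l + 1) (F - n) +
              zBS w BL WL bw wgt (2 * p + 1, l + 1) n}) := by
  classical
  constructor
  · exact zBS_zero w BL WL bw wgt (p, l)
  set T : Set ℝ := {x : ℝ | ∃ n, n ≤ F ∧
      x = zBS w BL WL bw wgt (2 * p, l + 1) (F - n) +
          zBS w BL WL bw wgt (2 * p + 1, l + 1) n} with hT
  have hTne : T.Nonempty := ⟨_, 0, Nat.zero_le F, rfl⟩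
  have hTbdd : BddBelow T := by
    refine ⟨-(∑ ip ∈ BL, bw ip) + -(∑ ip ∈ BL, bw ip), ?_⟩
    rintro x ⟨n, hn, rfl⟩
    have h1 := zBS_lb w BL WL bw wgt hb hwgt (2 * p, l + 1) (F - n)
    have h2 := zBS_lb w BL WL bw wgt hb hwgt (2 * p + 1, l + 1) n
    linarith
  apply le_antisymm
  · apply le_min
    · -- singleton witness
      rw [zBS_eq]
      apply csInf_le (bs_bdd w BL WL bw wgt hb hwgt _ _)
      refine ⟨{(p, l)}, ⟨?_, ?_, ?_⟩, ?_⟩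
      · intro q hq
        rw [Finset.mem_singleton] at hq
        subst hq
        exact ⟨⟨le_of_lt hl, hp⟩, fun ip h => h⟩
      · simpa using hF
      · intro q hq q' hq' hne
        rw [Finset.mem_singleton] at hq hq'
        exact absurd (hq.trans hq'.symm) hne
      · simp [bsCost]
    · -- ≤ each z_L + z_R
      apply le_csInf hTne
      rintro x ⟨n, hn, rfl⟩
      rw [zBS_eq]
      set AD := bsSet w BL WL bw wgt (p, l) F with hAD
      set AL := bsSet w BL WL bw wgt (2 * p, l + 1) (F - n) with hAL
      set AR := bsSet w BL WL bw wgt (2 * p + 1, l + 1) n with hAR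
      have key : ∀ aL ∈ AL, ∀ aR ∈ AR, sInf AD ≤ aL + aR := by
        rintro _ ⟨SL, hSL, rfl⟩ _ ⟨SR, hSR, rfl⟩
        obtain ⟨hfeas, hcost⟩ := bs_union BL WL bw wgt hl hn hSL hSR
        calc sInf AD ≤ bsCost w BL WL bw wgt (SL ∪ SR) :=
              csInf_le (bs_bdd w BL WL bw wgt hb hwgt _ _) ⟨SL ∪ SR, hfeas, rfl⟩
          _ = _ := hcost
      have h1 : ∀ aR ∈ AR, sInf AD - aR ≤ sInf AL := fun aR hR =>
        le_csInf (bs_nonempty w BL WL bw wgt _ _)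
          (fun aL hL => by linarith [key aL hL aR hR])
      have h2 : sInf AD - sInf AL ≤ sInf AR :=
        le_csInf (bs_nonempty w BL WL bw wgt _ _) (fun aR hR => by linarith [h1 aR hR])
      rw [zBS_eq, zBS_eq, ← hAL, ← hAR]
      linarith
  · -- min is a lower bound
    rw [zBS_eq]
    apply le_csInf (bs_nonempty w BL WL bw wgt _ _)
    rintro x ⟨S, ⟨hsub, hcard, hpd⟩, rfl⟩
    by_cases hD : (p, l) ∈ S
    · have hSeq : S = {(p, l)} := by
        apply Finset.eq_singleton_iff_unique_mem.mpr
        refine ⟨hD, fun q hq => ?_⟩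
        by_contra hne
        exact hpd q hq (p, l) hD hne _
          ⟨inI_self, (hsub q hq).2 _ (inI_self (w := w) (q := q))⟩
      have : bsCost w BL WL bw wgt S =
          (∑ ip ∈ WL.filter (fun ip => inI w (p, l) ip), wgt ip) -
          (∑ ip ∈ BL.filter (fun ip => inI w (p, l) ip), bw ip) := by
        rw [hSeq]; simp [bsCost]
      rw [this]
      exact min_le_left _ _
    · -- split S into left and right parts
      set SL := S.filter (fun q => ∀ ip, inI w q ip → inI w (2 * p, l + 1) ip) with hSL
      set SR := S \ SL with hSR
      have hSLsub : SL ⊆ S := Finset.filter_subset _ _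
      have hLprop : ∀ q ∈ SL, ∀ ip, inI w q ip → inI w (2 * p, l + 1) ip :=
        fun q hq => (Finset.mem_filter.mp hq).2
      have hRprop : ∀ q ∈ SR, ∀ ip, inI w q ip → inI w (2 * p + 1, l + 1) ip := by
        intro q hq
        have hqS : q ∈ S := (Finset.mem_sdiff.mp hq).1
        have hqnL : q ∉ SL := (Finset.mem_sdiff.mp hq).2
        have hne : q ≠ (p, l) := fun h => hD (h ▸ hqS)
        obtain ⟨a, m⟩ := q
        rcases bs_split hl (hsub _ hqS).1 (hsub _ hqS).2 hne with h | h
        · exact absurd (Finset.mem_filter.mpr ⟨hqS, h⟩) hqnL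
        · exact h
      have hRsubS : SR ⊆ S := Finset.sdiff_subset
      have hcards : SL.card + SR.card = S.card := by
        rw [hSR, Finset.card_sdiff_of_subset hSLsub]
        have := Finset.card_le_card hSLsub
        omega
      set nR := SR.card with hnR
      have hfL : bsFeas w (2 * p, l + 1) (F - nR) SL :=
        ⟨fun q hq => ⟨(hsub q (hSLsub hq)).1, hLprop q hq⟩, by omega,
          fun q hq q' hq' hne => hpd q (hSLsub hq) q' (hSLsub hq') hne⟩
      have hfR : bsFeas w (2 * p + 1, l + 1) nR SR :=
        ⟨fun q hq => ⟨(hsub q (hRsubS hq)).1, hRprop q hq⟩, le_rfl,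
          fun q hq q' hq' hne => hpd q (hRsubS hq) q' (hRsubS hq') hne⟩
      have hzL : zBS w BL WL bw wgt (2 * p, l + 1) (F - nR) ≤ bsCost w BL WL bw wgt SL := by
        rw [zBS_eq]
        exact csInf_le (bs_bdd w BL WL bw wgt hb hwgt _ _) ⟨SL, hfL, rfl⟩
      have hzR : zBS w BL WL bw wgt (2 * p + 1, l + 1) nR ≤ bsCost w BL WL bw wgt SR := by
        rw [zBS_eq]
        exact csInf_le (bs_bdd w BL WL bw wgt hb hwgt _ _) ⟨SR, hfR, rfl⟩
      have hSsplit : bsCost w BL WL bw wgt S =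
          bsCost w BL WL bw wgt SL + bsCost w BL WL bw wgt SR := by
        have hdisj : Disjoint SL SR := Finset.disjoint_sdiff
        have hunion : SL ∪ SR = S := Finset.union_sdiff_of_subset hSLsub
        unfold bsCost
        rw [← hunion, Finset.sum_union hdisj, Finset.sum_union hdisj]
        ring
      have hmemT : zBS w BL WL bw wgt (2 * p, l + 1) (F - nR) +
          zBS w BL WL bw wgt (2 * p + 1, l + 1) nR ∈ T := ⟨nR, by omega, rfl⟩
      calc min _ (sInf T) ≤ sInf T := min_le_right _ _
        _ ≤ _ := csInf_le hTbdd hmemT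
        _ ≤ bsCost w BL WL bw wgt SL + bsCost w BL WL bw wgt SR := by linarith
        _ = bsCost w BL WL bw wgt S := hSsplit.symm
end

section
/- FLOODING DP recursion correctness: for a dyadic interval D with halves D_L, D_R, filters F ≥ 0 and capacity c ≥ 0, let z_D(F,c) be the minimum of Σ_{D'∈S} g_{D'} over sets S of at most F pairwise-disjoint dyadic subintervals of D such that the unblocked traffic of D, T_D − Σ_{D'∈S}(g_{D'} + b_{D'}), is ≤ c (with value +∞ if no such S exists). Then for F ≥ 1 with D not a single address: z_D(F,c) = min( [g_D if 0 ≤ c], min over n=0..F, m=0..c of z_{D_L}(F−n, c−m) + z_{D_R}(n, m) ) where the first option (blocking D entirely, leaving 0 traffic) is available whenever F ≥ 1, traffic weights are natural numbers, and T_{D_L}, T_{D_R} denote total traffic in each half with T_D = T_{D_L} + T_{D_R}. -/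
/-- Good (whitelist) traffic of a prefix, natural-number weights. -/
def gN (w : ℕ) (WL : Finset ℕ) (wgt : ℕ → ℕ) (q : ℕ × ℕ) : ℕ :=
  ∑ ip ∈ WL.filter (fun ip => inI w q ip), wgt ip

/-- `zF w BL WL bw wgt D F c`: FLOODING optimum on `D`: minimum good traffic blocked by at
most `F` pairwise-disjoint dyadic subintervals of `D` leaving unblocked traffic `≤ c`;
`⊤` (i.e. `+∞`) if infeasible. -/
noncomputable def zF (w : ℕ) (BL WL : Finset ℕ) (bw wgt : ℕ → ℕ) (D : ℕ × ℕ)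
    (F c : ℕ) : WithTop ℕ :=
  sInf {x : WithTop ℕ | ∃ S : Finset (ℕ × ℕ),
    (∀ q ∈ S, ValidPrefix w q ∧ ∀ ip, inI w q ip → inI w D ip) ∧
    S.card ≤ F ∧ PairwiseDisjointI w S ∧
    (gN w WL wgt D + gN w BL bw D) -
        (∑ q ∈ S, (gN w WL wgt q + gN w BL bw q)) ≤ c ∧
    x = (∑ q ∈ S, gN w WL wgt q : ℕ)}

lemma inI_split {w p l : ℕ} (hl : l < w) (ip : ℕ) :
    inI w (p, l) ip ↔ inI w (2*p, l+1) ip ∨ inI w (2*p+1, l+1) ip := by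
  have h1 : w - l = (w - (l+1)) + 1 := by omega
  have ht : 0 < 2 ^ (w - (l+1)) := pow_pos (by norm_num) _
  simp only [inI, h1, pow_succ]
  constructor
  · rintro ⟨ha, hb⟩
    rcases lt_or_ge ip ((2*p+1) * 2 ^ (w - (l+1))) with h | h
    · exact Or.inl ⟨by linarith, h⟩
    · exact Or.inr ⟨h, by linarith⟩
  · rintro (⟨ha, hb⟩ | ⟨ha, hb⟩)
    · exact ⟨by linarith, by linarith⟩
    · exact ⟨by linarith, by linarith⟩

lemma halves_disjoint {w p l : ℕ} (ip : ℕ) :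
    ¬(inI w (2*p, l+1) ip ∧ inI w (2*p+1, l+1) ip) := by
  rintro ⟨⟨_, h1⟩, ⟨h2, _⟩⟩
  simp only [inI] at h1 h2
  exact absurd h2 (not_le.mpr h1)

lemma gN_split {w p l : ℕ} (hl : l < w) (A : Finset ℕ) (f : ℕ → ℕ) :
    gN w A f (p, l) = gN w A f (2*p, l+1) + gN w A f (2*p+1, l+1) := by
  classical
  unfold gN
  rw [← Finset.sum_union]
  · congr 1
    ext ip
    simp only [Finset.mem_union, Finset.mem_filter]
    constructor
    · rintro ⟨h1, h2⟩
      rcases (inI_split hl ip).1 h2 with h | h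
      exacts [Or.inl ⟨h1, h⟩, Or.inr ⟨h1, h⟩]
    · rintro (⟨h1, h2⟩ | ⟨h1, h2⟩) <;> exact ⟨h1, (inI_split hl ip).2 (by tauto)⟩
  · rw [Finset.disjoint_left]
    intro ip h1 h2
    rw [Finset.mem_filter] at h1 h2
    exact halves_disjoint ip ⟨h1.2, h2.2⟩

lemma sum_gN_le {w : ℕ} {S : Finset (ℕ × ℕ)} {D : ℕ × ℕ} (A : Finset ℕ) (f : ℕ → ℕ)
    (hsub : ∀ q ∈ S, ∀ ip, inI w q ip → inI w D ip)
    (hdisj : PairwiseDisjointI w S) :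
    ∑ q ∈ S, gN w A f q ≤ gN w A f D := by
  classical
  unfold gN
  rw [← Finset.sum_biUnion]
  · apply Finset.sum_le_sum_of_subset
    intro ip hip
    simp only [Finset.mem_biUnion, Finset.mem_filter] at *
    obtain ⟨q, hq, h1, h2⟩ := hip
    exact ⟨h1, hsub q hq ip h2⟩
  · intro q hq q' hq' hne
    simp only [Finset.mem_coe] at hq hq'
    refine Finset.disjoint_left.mpr ?_
    intro ip h1 h2
    rw [Finset.mem_filter] at h1 h2
    exact hdisj q hq q' hq' hne ip ⟨h1.2, h2.2⟩

lemma laminar {w p l : ℕ} (hl : l < w) {q : ℕ × ℕ} (hq : ValidPrefix w q)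
    (hsub : ∀ ip, inI w q ip → inI w (p, l) ip) :
    q = (p, l) ∨ (∀ ip, inI w q ip → inI w (2*p, l+1) ip) ∨
      (∀ ip, inI w q ip → inI w (2*p+1, l+1) ip) := by
  obtain ⟨q1, q2⟩ := q
  obtain ⟨hq2, hq1⟩ := hq
  simp only [inI] at hsub ⊢
  have ht : 0 < 2 ^ (w - q2) := pow_pos (by norm_num) _
  have hK : 0 < 2 ^ (w - l) := pow_pos (by norm_num) _
  have h1 := hsub (q1 * 2 ^ (w - q2)) ⟨le_refl _, by nlinarith⟩
  have h2 := hsub ((q1 + 1) * 2 ^ (w - q2) - 1)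
    ⟨Nat.le_sub_one_of_lt (by nlinarith), Nat.sub_lt (by positivity : 0 < (q1 + 1) * 2 ^ (w - q2)) one_pos⟩
  have hup : (q1 + 1) * 2 ^ (w - q2) ≤ (p + 1) * 2 ^ (w - l) := by
    have hpos : 0 < (q1 + 1) * 2 ^ (w - q2) := by positivity
    have := h2.2
    set X := (q1 + 1) * 2 ^ (w - q2)
    omega
  by_cases hcase : q2 ≤ l
  · left
    have hKe : 2 ^ (w - q2) = 2 ^ (w - l) * 2 ^ (l - q2) := by
      rw [← pow_add]; congr 1; omega
    have he : 0 < 2 ^ (l - q2) := pow_pos (by norm_num) _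
    rw [hKe] at h1 hup
    have ha : p ≤ q1 * 2 ^ (l - q2) := by
      have : p * 2 ^ (w - l) ≤ q1 * 2 ^ (l - q2) * 2 ^ (w - l) := by
        calc p * 2 ^ (w - l) ≤ q1 * (2 ^ (w - l) * 2 ^ (l - q2)) := h1.1
          _ = q1 * 2 ^ (l - q2) * 2 ^ (w - l) := by ring
      exact Nat.le_of_mul_le_mul_right this hK
    have hb : q1 * 2 ^ (l - q2) < p + 1 := by
      have : q1 * 2 ^ (l - q2) * 2 ^ (w - l) < (p + 1) * 2 ^ (w - l) := by
        calc q1 * 2 ^ (l - q2) * 2 ^ (w - l) = q1 * (2 ^ (w - l) * 2 ^ (l - q2)) := by ring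
          _ < (p + 1) * 2 ^ (w - l) := h1.2
      exact Nat.lt_of_mul_lt_mul_right this
    have hc : (q1 + 1) * 2 ^ (l - q2) ≤ p + 1 := by
      have : (q1 + 1) * 2 ^ (l - q2) * 2 ^ (w - l) ≤ (p + 1) * 2 ^ (w - l) := by
        calc (q1 + 1) * 2 ^ (l - q2) * 2 ^ (w - l)
            = (q1 + 1) * (2 ^ (w - l) * 2 ^ (l - q2)) := by ring
          _ ≤ (p + 1) * 2 ^ (w - l) := hup
      exact Nat.le_of_mul_le_mul_right this hK
    have he1 : 2 ^ (l - q2) = 1 := by nlinarith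
    have hlq : l - q2 = 0 := by
      by_contra hne
      have : 2 ≤ 2 ^ (l - q2) := by
        calc 2 = 2 ^ 1 := rfl
          _ ≤ 2 ^ (l - q2) := Nat.pow_le_pow_right (by norm_num) (by omega)
      omega
    have hq2l : q2 = l := by omega
    subst hq2l
    rw [he1] at ha hb
    simp only [mul_one] at ha hb
    have : q1 = p := by omega
    simp [this]
  · have hte : 2 ^ (w - (l+1)) = 2 ^ (w - q2) * 2 ^ (q2 - (l+1)) := by
      rw [← pow_add]; congr 1; omega
    have hKte : 2 ^ (w - l) = 2 * (2 ^ (w - q2) * 2 ^ (q2 - (l+1))) := by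
      have hwl : w - l = (w - q2) + (q2 - (l+1)) + 1 := by omega
      rw [hwl, pow_add, pow_add, pow_one]; ring
    have he : 0 < 2 ^ (q2 - (l+1)) := pow_pos (by norm_num) _
    set t := 2 ^ (w - q2) with htdef
    set e := 2 ^ (q2 - (l+1)) with hedef
    rw [hKte] at h1 hup
    rcases lt_or_ge (q1 * t) ((2*p+1) * (t * e)) with hc | hc
    · right; left
      have hq1lt : q1 < (2*p+1) * e := by
        have : q1 * t < (2*p+1) * e * t := by
          calc q1 * t < (2*p+1) * (t * e) := hc
            _ = (2*p+1) * e * t := by ring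
        exact Nat.lt_of_mul_lt_mul_right this
      have hub : (q1 + 1) * t ≤ (2*p+1) * (t * e) := by
        calc (q1 + 1) * t ≤ ((2*p+1) * e) * t := Nat.mul_le_mul_right t hq1lt
          _ = (2*p+1) * (t * e) := by ring
      intro ip hip
      rw [hte]
      constructor
      · calc 2 * p * (t * e) = p * (2 * (t * e)) := by ring
          _ ≤ q1 * t := h1.1
          _ ≤ ip := hip.1
      · calc ip < (q1 + 1) * t := hip.2
          _ ≤ (2*p+1) * (t * e) := hub
    · right; right
      intro ip hip
      rw [hte]
      refine ⟨le_trans hc hip.1, ?_⟩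
      calc ip < (q1 + 1) * t := hip.2
        _ ≤ (p + 1) * (2 * (t * e)) := hup
        _ = (2*p+1+1) * (t * e) := by ring

lemma sInf_attained (s : Set (WithTop ℕ)) : sInf s = ⊤ ∨ sInf s ∈ s := by
  by_cases h : ∀ x ∈ s, x = ⊤
  · exact Or.inl (le_antisymm le_top (le_sInf fun x hx => (h x hx).ge))
  · right
    push_neg at h
    obtain ⟨x, hx, hxt⟩ := h
    lift x to ℕ using hxt
    have hne : {n : ℕ | (n : WithTop ℕ) ∈ s}.Nonempty := ⟨x, hx⟩
    have hmem : (↑(sInf {n : ℕ | (n : WithTop ℕ) ∈ s}) : WithTop ℕ) ∈ s := Nat.sInf_mem hne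
    have heq : sInf s = ↑(sInf {n : ℕ | (n : WithTop ℕ) ∈ s}) := by
      refine le_antisymm (sInf_le hmem) (le_sInf ?_)
      intro b hb
      induction b using WithTop.recTopCoe with
      | top => exact le_top
      | coe n => exact WithTop.coe_le_coe.mpr <| Nat.sInf_le (show n ∈ {n : ℕ | (n : WithTop ℕ) ∈ s} from hb)
    rw [heq]; exact hmem

/-- Feasibility predicate for the FLOODING problem on `D`. -/
def Feas (w : ℕ) (BL WL : Finset ℕ) (bw wgt : ℕ → ℕ) (D : ℕ × ℕ) (F c : ℕ)
    (S : Finset (ℕ × ℕ)) : Prop :=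
  (∀ q ∈ S, ValidPrefix w q ∧ ∀ ip, inI w q ip → inI w D ip) ∧
  S.card ≤ F ∧ PairwiseDisjointI w S ∧
  (gN w WL wgt D + gN w BL bw D) - (∑ q ∈ S, (gN w WL wgt q + gN w BL bw q)) ≤ c

lemma zF_le_of_feas {w : ℕ} {BL WL : Finset ℕ} {bw wgt : ℕ → ℕ} {D : ℕ × ℕ} {F c : ℕ}
    {S : Finset (ℕ × ℕ)} (h : Feas w BL WL bw wgt D F c S) :
    zF w BL WL bw wgt D F c ≤ (∑ q ∈ S, gN w WL wgt q : ℕ) := by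
  apply sInf_le
  exact ⟨S, h.1, h.2.1, h.2.2.1, h.2.2.2, rfl⟩

lemma zF_cases (w : ℕ) (BL WL : Finset ℕ) (bw wgt : ℕ → ℕ) (D : ℕ × ℕ) (F c : ℕ) :
    zF w BL WL bw wgt D F c = ⊤ ∨
    ∃ S, Feas w BL WL bw wgt D F c S ∧
      zF w BL WL bw wgt D F c = (∑ q ∈ S, gN w WL wgt q : ℕ) := by
  rcases sInf_attained {x : WithTop ℕ | ∃ S : Finset (ℕ × ℕ),
    (∀ q ∈ S, ValidPrefix w q ∧ ∀ ip, inI w q ip → inI w D ip) ∧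
    S.card ≤ F ∧ PairwiseDisjointI w S ∧
    (gN w WL wgt D + gN w BL bw D) -
        (∑ q ∈ S, (gN w WL wgt q + gN w BL bw q)) ≤ c ∧
    x = (∑ q ∈ S, gN w WL wgt q : ℕ)} with h | h
  · exact Or.inl h
  · obtain ⟨S, h1, h2, h3, h4, h5⟩ := h
    exact Or.inr ⟨S, ⟨h1, h2, h3, h4⟩, h5⟩

lemma le_zF {w : ℕ} {BL WL : Finset ℕ} {bw wgt : ℕ → ℕ} {D : ℕ × ℕ} {F c : ℕ}
    {x : WithTop ℕ}
    (h : ∀ S, Feas w BL WL bw wgt D F c S → x ≤ (∑ q ∈ S, gN w WL wgt q : ℕ)) :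
    x ≤ zF w BL WL bw wgt D F c := by
  apply le_sInf
  rintro b ⟨S, h1, h2, h3, h4, rfl⟩
  exact h S ⟨h1, h2, h3, h4⟩

/-- FLOODING dynamic-programming recursion: for `F ≥ 1` and `D` not a single address,
`z_D(F, c) = min(g_D, min over n ≤ F, m ≤ c of z_{D_L}(F−n, c−m) + z_{D_R}(n, m))`. -/
theorem stmt16 (w p l F c : ℕ) (BL WL : Finset ℕ) (bw wgt : ℕ → ℕ)
    (hl : l < w) (hp : p < 2 ^ l) (hF : 1 ≤ F) :
    zF w BL WL bw wgt (p, l) F c =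
      min ((gN w WL wgt (p, l) : WithTop ℕ))
        (sInf {x : WithTop ℕ | ∃ n ≤ F, ∃ m ≤ c,
          x = zF w BL WL bw wgt (2 * p, l + 1) (F - n) (c - m) +
              zF w BL WL bw wgt (2 * p + 1, l + 1) n m}) := by
  classical
  apply le_antisymm
  · apply le_min
    · have hfeas : Feas w BL WL bw wgt (p, l) F c {(p, l)} := by
        refine ⟨?_, ?_, ?_, ?_⟩
        · intro q hq
          rw [Finset.mem_singleton] at hq
          subst hq
          exact ⟨⟨hl.le, hp⟩, fun ip h => h⟩
        · simpa using hF
        · intro q hq q' hq' hne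
          rw [Finset.mem_singleton] at hq hq'
          subst hq; subst hq'
          exact absurd rfl hne
        · simp
      simpa using zF_le_of_feas hfeas
    · apply le_sInf
      rintro x ⟨n, hn, m, hm, rfl⟩
      rcases zF_cases w BL WL bw wgt (2*p, l+1) (F-n) (c-m) with h | ⟨SL, hSL, hvalL⟩
      · rw [h]; simp
      rcases zF_cases w BL WL bw wgt (2*p+1, l+1) n m with h | ⟨SR, hSR, hvalR⟩
      · rw [h]; simp
      rw [hvalL, hvalR]
      obtain ⟨hqL, hcardL, hpdL, htrL⟩ := hSL
      obtain ⟨hqR, hcardR, hpdR, htrR⟩ := hSR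
      have hdisjLR : Disjoint SL SR := by
        rw [Finset.disjoint_left]
        intro q hq1 hq2
        have h1 := hqL q hq1
        have h2 := hqR q hq2
        have hmem : inI w q (q.1 * 2 ^ (w - q.2)) := by
          have ht : 0 < 2 ^ (w - q.2) := pow_pos (by norm_num) _
          exact ⟨le_refl _, by nlinarith⟩
        exact halves_disjoint _ ⟨h1.2 _ hmem, h2.2 _ hmem⟩
      have hfeas : Feas w BL WL bw wgt (p, l) F c (SL ∪ SR) := by
        refine ⟨?_, ?_, ?_, ?_⟩
        · intro q hq
          rcases Finset.mem_union.mp hq with h | h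
          · exact ⟨(hqL q h).1, fun ip hip => (inI_split hl ip).2 (Or.inl ((hqL q h).2 ip hip))⟩
          · exact ⟨(hqR q h).1, fun ip hip => (inI_split hl ip).2 (Or.inr ((hqR q h).2 ip hip))⟩
        · rw [Finset.card_union_of_disjoint hdisjLR]
          omega
        · intro q hq q' hq' hne ip hip
          rcases Finset.mem_union.mp hq with h | h <;> rcases Finset.mem_union.mp hq' with h' | h'
          · exact hpdL q h q' h' hne ip hip
          · exact halves_disjoint ip ⟨(hqL q h).2 ip hip.1, (hqR q' h').2 ip hip.2⟩
          · exact halves_disjoint ip ⟨(hqL q' h').2 ip hip.2, (hqR q h).2 ip hip.1⟩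
          · exact hpdR q h q' h' hne ip hip
        · rw [Finset.sum_union hdisjLR]
          have e1 := gN_split (w := w) (p := p) (l := l) hl WL wgt
          have e2 := gN_split (w := w) (p := p) (l := l) hl BL bw
          omega
      have hle := zF_le_of_feas hfeas
      rw [Finset.sum_union hdisjLR] at hle
      refine hle.trans ?_
      push_cast
      rfl
  · apply le_zF
    intro S hfS
    obtain ⟨hq, hcard, hpd, htr⟩ := hfS
    by_cases hDS : (p, l) ∈ S
    · refine le_trans (min_le_left _ _) ?_
      have h := Finset.single_le_sum (f := fun q => gN w WL wgt q) (fun q _ => Nat.zero_le _) hDS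
      exact WithTop.coe_le_coe.mpr h
    · refine le_trans (min_le_right _ _) ?_
      set SL := S.filter (fun q => ∀ ip, inI w q ip → inI w (2*p, l+1) ip) with hSLdef
      set SR := S.filter (fun q => ¬ ∀ ip, inI w q ip → inI w (2*p, l+1) ip) with hSRdef
      have hmemL : ∀ q ∈ SL, q ∈ S ∧ ∀ ip, inI w q ip → inI w (2*p, l+1) ip := by
        intro q hq'
        rw [hSLdef, Finset.mem_filter] at hq'
        exact hq'
      have hmemR : ∀ q ∈ SR, q ∈ S ∧ ∀ ip, inI w q ip → inI w (2*p+1, l+1) ip := by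
        intro q hq'
        rw [hSRdef, Finset.mem_filter] at hq'
        refine ⟨hq'.1, ?_⟩
        rcases laminar hl (hq q hq'.1).1 (hq q hq'.1).2 with h | h | h
        · exact absurd (h ▸ hq'.1) hDS
        · exact absurd h hq'.2
        · exact h
      have hsubL := fun q hq' => (hmemL q hq').2
      have hsubR := fun q hq' => (hmemR q hq').2
      have hpdL : PairwiseDisjointI w SL :=
        fun a ha b hb => hpd a (hmemL a ha).1 b (hmemL b hb).1
      have hpdR : PairwiseDisjointI w SR :=
        fun a ha b hb => hpd a (hmemR a ha).1 b (hmemR b hb).1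
      have hsum1 : ∀ f : ℕ × ℕ → ℕ, ∑ q ∈ S, f q = ∑ q ∈ SL, f q + ∑ q ∈ SR, f q := by
        intro f
        rw [hSLdef, hSRdef]
        exact (Finset.sum_filter_add_sum_filter_not S _ f).symm
      have hcards : SL.card + SR.card = S.card := by
        rw [hSLdef, hSRdef]
        exact Finset.card_filter_add_card_filter_not _
      have hBL1 := sum_gN_le (S := SL) (D := (2*p, l+1)) WL wgt hsubL hpdL
      have hBL2 := sum_gN_le (S := SL) (D := (2*p, l+1)) BL bw hsubL hpdL
      have hBR1 := sum_gN_le (S := SR) (D := (2*p+1, l+1)) WL wgt hsubR hpdR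
      have hBR2 := sum_gN_le (S := SR) (D := (2*p+1, l+1)) BL bw hsubR hpdR
      have hsaL : ∑ q ∈ SL, (gN w WL wgt q + gN w BL bw q)
          = ∑ q ∈ SL, gN w WL wgt q + ∑ q ∈ SL, gN w BL bw q := Finset.sum_add_distrib
      have hsaR : ∑ q ∈ SR, (gN w WL wgt q + gN w BL bw q)
          = ∑ q ∈ SR, gN w WL wgt q + ∑ q ∈ SR, gN w BL bw q := Finset.sum_add_distrib
      have e1 := gN_split (w := w) (p := p) (l := l) hl WL wgt
      have e2 := gN_split (w := w) (p := p) (l := l) hl BL bw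
      have hsq := hsum1 (fun q => gN w WL wgt q + gN w BL bw q)
      have hg := hsum1 (fun q => gN w WL wgt q)
      set m' : ℕ := (gN w WL wgt (2*p+1, l+1) + gN w BL bw (2*p+1, l+1))
          - ∑ q ∈ SR, (gN w WL wgt q + gN w BL bw q) with hm'def
      have hm'c : m' ≤ c := by omega
      have hfL : Feas w BL WL bw wgt (2*p, l+1) (F - SR.card) (c - m') SL := by
        refine ⟨fun q hq' => ⟨(hq q (hmemL q hq').1).1, hsubL q hq'⟩, by omega, hpdL, by omega⟩
      have hfR : Feas w BL WL bw wgt (2*p+1, l+1) SR.card m' SR := by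
        refine ⟨fun q hq' => ⟨(hq q (hmemR q hq').1).1, hsubR q hq'⟩, le_refl _, hpdR, by omega⟩
      have hL := zF_le_of_feas hfL
      have hR := zF_le_of_feas hfR
      have hB : sInf {x : WithTop ℕ | ∃ n ≤ F, ∃ m ≤ c,
          x = zF w BL WL bw wgt (2 * p, l + 1) (F - n) (c - m) +
              zF w BL WL bw wgt (2 * p + 1, l + 1) n m}
          ≤ zF w BL WL bw wgt (2*p, l+1) (F - SR.card) (c - m') +
            zF w BL WL bw wgt (2*p+1, l+1) SR.card m' :=
        sInf_le ⟨SR.card, by omega, m', hm'c, rfl⟩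
      refine hB.trans ?_
      refine (add_le_add hL hR).trans ?_
      rw [hg]
      push_cast
      rfl
end
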